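/- Let ρ' = (U₁⊗U₂) ρ (U₁⊗U₂)† for unitaries U₁ ∈ U(d₁), U₂ ∈ U(d₂) and a bipartite density matrix ρ on ℂ^{d₁}⊗ℂ^{d₂}. Then the correlation matrix S(ρ') = [tr(ρ' A_{ij}^{(1)†}⊗A_{kl}^{(2)†})]_{(ij),(kl)≠(00)} has the same singular values as S(ρ); in particular ‖S(ρ')‖_tr = ‖S(ρ)‖_tr. -/

import Mathlib

open Matrix
open scoped Kronecker ComplexOrder

/-- The principal basis matrices `A_{ij} = ∑_m ω^{im} E_{m, m+j}` on `ℂ^d`. -/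
noncomputable def principalBasis (d : ℕ) [NeZero d] (i j : ZMod d) :
    Matrix (ZMod d) (ZMod d) ℂ :=
  ∑ m : ZMod d, (Complex.exp (2 * Real.pi * Complex.I / d)) ^ ((i * m).val) •
    Matrix.single m (m + j) (1 : ℂ)

/-- The square root of a positive semidefinite matrix (as in the older Mathlib). -/
noncomputable def Matrix.PosSemidef.sqrt {n : Type*} {𝕜 : Type*} [Fintype n] [DecidableEq n]
    [RCLike 𝕜] {A : Matrix n n 𝕜} (hA : A.PosSemidef) : Matrix n n 𝕜 :=
  hA.1.eigenvectorUnitary.1 * diagonal ((↑) ∘ (√·) ∘ hA.1.eigenvalues) *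
    (star hA.1.eigenvectorUnitary : Matrix n n 𝕜)

/-- The trace norm `‖P‖_tr = tr √(P†P)`. -/
noncomputable def traceNorm {m n : Type*} [Fintype m] [Fintype n] [DecidableEq n]
    (P : Matrix m n ℂ) : ℝ :=
  RCLike.re (Matrix.PosSemidef.sqrt (Matrix.posSemidef_conjTranspose_mul_self P)).trace

/-- The correlation matrix `S(ρ) = [tr(ρ A_{ij}^{(1)†} ⊗ A_{kl}^{(2)†})]` of a
bipartite state, indexed by the pairs `(i,j) ≠ (0,0)` and `(k,l) ≠ (0,0)`. -/
noncomputable def corrMat (d₁ d₂ : ℕ) [NeZero d₁] [NeZero d₂]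
    (ρ : Matrix (ZMod d₁ × ZMod d₂) (ZMod d₁ × ZMod d₂) ℂ) :
    Matrix {p : ZMod d₁ × ZMod d₁ // p ≠ (0, 0)} {q : ZMod d₂ × ZMod d₂ // q ≠ (0, 0)} ℂ :=
  Matrix.of fun p q =>
    (ρ * ((principalBasis d₁ p.1.1 p.1.2)ᴴ ⊗ₖ (principalBasis d₂ q.1.1 q.1.2)ᴴ)).trace

set_option linter.unusedSectionVars false
set_option maxHeartbeats 1000000

namespace CorrAux
variable (d : ℕ) [NeZero d]

noncomputable def w : ℂ := Complex.exp (2 * Real.pi * Complex.I / d)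

lemma w_prim : IsPrimitiveRoot (w d) d := Complex.isPrimitiveRoot_exp d (NeZero.ne d)

lemma w_pow_d : w d ^ d = 1 := (w_prim d).pow_eq_one

noncomputable def χ (a : ZMod d) : ℂ := w d ^ a.val

lemma χ_natCast (n : ℕ) : χ d (n : ZMod d) = w d ^ n := by
  rw [χ, pow_eq_pow_mod n (w_pow_d d), ZMod.val_natCast]

lemma χ_zero : χ d 0 = 1 := by simp [χ]

lemma χ_add (a b : ZMod d) : χ d (a + b) = χ d a * χ d b := by
  have : a + b = ((a.val + b.val : ℕ) : ZMod d) := by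
    push_cast [ZMod.natCast_val, ZMod.cast_id]; ring
  rw [this, χ_natCast, pow_add, χ, χ]

lemma χ_conj (a : ZMod d) : (starRingEnd ℂ) (χ d a) = χ d (-a) := by
  have h1 : χ d a * χ d (-a) = 1 := by rw [← χ_add]; simp [χ_zero]
  have h2 : (starRingEnd ℂ) (w d) = (w d)⁻¹ := by
    rw [w, ← Complex.exp_conj, ← Complex.exp_neg]
    congr 1
    simp [Complex.ext_iff, neg_div]
  rw [χ, map_pow, h2, inv_pow, ← χ]
  exact inv_eq_of_mul_eq_one_right h1

lemma χ_sum (a : ZMod d) : ∑ m : ZMod d, χ d (a * m) = if a = 0 then (d : ℂ) else 0 := by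
  split_ifs with h
  · subst h; simp [χ_zero, ZMod.card]
  · have hval : ∀ m : ZMod d, χ d (a * m) = (χ d a) ^ m.val := by
      intro m
      have : a * m = ((a.val * m.val : ℕ) : ZMod d) := by
        push_cast [ZMod.natCast_val, ZMod.cast_id]; ring
      rw [this, χ_natCast, pow_mul, χ]
    have hζ1 : χ d a ≠ 1 := by
      rw [χ]
      exact (w_prim d).pow_ne_one_of_pos_of_lt (by simpa [ZMod.val_pos] using h) (ZMod.val_lt a)
    have hζd : (χ d a) ^ d = 1 := by
      rw [χ, ← pow_mul, mul_comm, pow_mul, w_pow_d, one_pow]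
    calc ∑ m : ZMod d, χ d (a * m) = ∑ i ∈ Finset.range d, (χ d a) ^ i := by
          refine Finset.sum_nbij' (fun m : ZMod d => m.val) (fun i : ℕ => (i : ZMod d))
            ?_ ?_ ?_ ?_ ?_
          · intro m _; exact Finset.mem_range.2 (ZMod.val_lt m)
          · intro i _; exact Finset.mem_univ _
          · intro m _; simp [ZMod.natCast_val, ZMod.cast_id]
          · intro i hi; exact ZMod.val_natCast_of_lt (Finset.mem_range.1 hi)
          · intro m _; exact hval m
      _ = 0 := by
          rw [geom_sum_eq hζ1, hζd]
          simp

end CorrAux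

namespace Part2
variable (d : ℕ) [NeZero d]
open CorrAux

lemma pb_apply (i j a b : ZMod d) :
    principalBasis d i j a b = if b = a + j then χ d (i * a) else 0 := by
  rw [principalBasis, Matrix.sum_apply]
  rw [Finset.sum_eq_single a]
  · by_cases h : b = a + j
    · simp [h, Matrix.single, χ, w]
    · simp [Matrix.single, Ne.symm h, h]
  · intro m _ hm
    simp [Matrix.single, hm]
  · simp

lemma pb_zero_zero : principalBasis d 0 0 = 1 := by
  ext a b
  rw [pb_apply]
  simp [Matrix.one_apply, eq_comm, χ_zero]

lemma trace_orth (i j k l : ZMod d) :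
    ((principalBasis d i j)ᴴ * principalBasis d k l).trace
      = if i = k ∧ j = l then (d : ℂ) else 0 := by
  have : ((principalBasis d i j)ᴴ * principalBasis d k l).trace
      = ∑ a : ZMod d, ∑ b : ZMod d,
          (starRingEnd ℂ) (principalBasis d i j b a) * principalBasis d k l b a := by
    simp [Matrix.trace, Matrix.mul_apply, Matrix.conjTranspose_apply]
  rw [this]
  rw [Finset.sum_comm]
  have hb : ∀ b : ZMod d, (∑ a : ZMod d,
      (starRingEnd ℂ) (principalBasis d i j b a) * principalBasis d k l b a)
      = if j = l then χ d ((k - i) * b) else 0 := by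
    intro b
    simp only [pb_apply, apply_ite (starRingEnd ℂ), map_zero, ite_mul, zero_mul, mul_ite, mul_zero]
    rw [Finset.sum_eq_single (b + j)]
    · by_cases h : j = l
      · subst h
        simp only [eq_self_iff_true, if_true, if_pos rfl]
        rw [χ_conj, ← χ_add]
        congr 1
        ring
      · have : ¬ (b + j = b + l) := by simpa using h
        simp [this, h]
    · intro a _ ha
      simp [ha]
    · simp
  simp only [hb]
  by_cases h : j = l
  · subst h
    simp only [if_true]
    rw [show (∑ b : ZMod d, χ d ((k - i) * b)) = if k - i = 0 then (d:ℂ) else 0 from χ_sum d _]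
    by_cases hik : i = k
    · simp [hik]
    · have : ¬ (k - i = 0) := by
        rw [sub_eq_zero]; exact fun hh => hik hh.symm
      simp [this, hik]
  · simp [h]

lemma expansion (X : Matrix (ZMod d) (ZMod d) ℂ) :
    (d:ℂ)⁻¹ • ∑ r : ZMod d × ZMod d,
      (X * principalBasis d r.1 r.2).trace • (principalBasis d r.1 r.2)ᴴ = X := by
  have hd : (d : ℂ) ≠ 0 := Nat.cast_ne_zero.2 (NeZero.ne d)
  ext a b
  simp only [Matrix.smul_apply, Matrix.sum_apply, Matrix.conjTranspose_apply, smul_eq_mul,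
    Fintype.sum_prod_type, Complex.star_def]
  have htr : ∀ i j : ZMod d, (X * principalBasis d i j).trace
      = ∑ e : ZMod d, X (e + j) e * χ d (i * e) := by
    intro i j
    rw [Matrix.trace]
    simp only [Matrix.diag_apply, Matrix.mul_apply]
    rw [Finset.sum_comm]
    refine Finset.sum_congr rfl fun e _ => ?_
    rw [Finset.sum_eq_single (e + j)]
    · simp [pb_apply]
    · intro c _ hc
      simp [pb_apply, hc]
    · simp
  have hj : ∀ i : ZMod d, (∑ j : ZMod d, (X * principalBasis d i j).trace *
        (starRingEnd ℂ) (principalBasis d i j b a))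
      = (X * principalBasis d i (a - b)).trace * (starRingEnd ℂ) (χ d (i * b)) := by
    intro i
    rw [Finset.sum_eq_single (a - b)]
    · simp [pb_apply]
    · intro j _ hj
      have : ¬ (a = b + j) := by
        intro hh; exact hj (by rw [hh]; ring)
      simp [pb_apply, this]
    · simp
  simp only [hj]
  simp only [htr, Finset.sum_mul]
  rw [Finset.sum_comm]
  have he : ∀ e : ZMod d, (∑ i : ZMod d, X (e + (a - b)) e * χ d (i * e) *
        (starRingEnd ℂ) (χ d (i * b)))
      = X (e + (a - b)) e * (if e - b = 0 then (d:ℂ) else 0) := by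
    intro e
    rw [← χ_sum d (e - b)]
    rw [Finset.mul_sum]
    refine Finset.sum_congr rfl fun i _ => ?_
    rw [χ_conj, mul_assoc, ← χ_add]
    ring_nf
  simp only [he]
  rw [Finset.sum_eq_single b]
  · rw [if_pos (sub_self b), show b + (a - b) = a by ring,
      mul_comm (X a b), ← mul_assoc, inv_mul_cancel₀ hd, one_mul]
  · intro e _ he'
    have : ¬ (e - b = 0) := sub_ne_zero.2 he'
    simp [this]
  · intro h
    exact absurd (Finset.mem_univ b) h

end Part2

namespace Part3
open CorrAux Part2
variable (d : ℕ) [NeZero d]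

lemma trace_orth' (r s : ZMod d × ZMod d) :
    ((principalBasis d r.1 r.2)ᴴ * principalBasis d s.1 s.2).trace
      = if r = s then (d : ℂ) else 0 := by
  rw [trace_orth]
  congr 1
  simp [Prod.ext_iff]

noncomputable def cf (U : Matrix (ZMod d) (ZMod d) ℂ) (p r : ZMod d × ZMod d) : ℂ :=
  (d:ℂ)⁻¹ * (Uᴴ * (principalBasis d p.1 p.2)ᴴ * U * principalBasis d r.1 r.2).trace

lemma expand_cf (U : Matrix (ZMod d) (ZMod d) ℂ) (p : ZMod d × ZMod d) :
    Uᴴ * (principalBasis d p.1 p.2)ᴴ * U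
      = ∑ r : ZMod d × ZMod d, cf d U p r • (principalBasis d r.1 r.2)ᴴ := by
  conv_lhs => rw [← expansion d (Uᴴ * (principalBasis d p.1 p.2)ᴴ * U)]
  rw [Finset.smul_sum]
  refine Finset.sum_congr rfl fun r _ => ?_
  rw [smul_smul, cf]

lemma cf_zero (U : Matrix (ZMod d) (ZMod d) ℂ) (hU : U ∈ Matrix.unitaryGroup (ZMod d) ℂ)
    (p : ZMod d × ZMod d) (hp : p ≠ (0, 0)) : cf d U p (0, 0) = 0 := by
  have hUU : U * Uᴴ = 1 := by
    simpa [Matrix.star_eq_conjTranspose] using (Matrix.mem_unitaryGroup_iff.mp hU)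
  rw [cf]
  have : (0 : ZMod d × ZMod d).1 = (0 : ZMod d) := rfl
  rw [show principalBasis d (0,0).1 (0,0).2 = 1 from pb_zero_zero d]
  rw [Matrix.mul_one]
  rw [Matrix.trace_mul_cycle, hUU, Matrix.one_mul]
  have htrp : ((principalBasis d p.1 p.2)ᴴ).trace = 0 := by
    have h0 : ((principalBasis d ((0:ZMod d),(0:ZMod d)).1 (0,0).2)ᴴ *
        principalBasis d p.1 p.2).trace = 0 := by
      rw [trace_orth' d (0,0) p, if_neg (fun h => hp h.symm)]
    rw [show principalBasis d ((0:ZMod d),(0:ZMod d)).1 (0,0).2 = 1 from pb_zero_zero d,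
      Matrix.conjTranspose_one, Matrix.one_mul] at h0
    rw [Matrix.trace_conjTranspose, h0, star_zero]
  rw [htrp, mul_zero]

lemma cf_orth (U : Matrix (ZMod d) (ZMod d) ℂ) (hU : U ∈ Matrix.unitaryGroup (ZMod d) ℂ)
    (p q : ZMod d × ZMod d) :
    ∑ r : ZMod d × ZMod d, cf d U p r * (starRingEnd ℂ) (cf d U q r)
      = if p = q then 1 else 0 := by
  have hd : (d : ℂ) ≠ 0 := Nat.cast_ne_zero.2 (NeZero.ne d)
  have hUU : U * Uᴴ = 1 := by
    simpa [Matrix.star_eq_conjTranspose] using (Matrix.mem_unitaryGroup_iff.mp hU)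
  set Ap := principalBasis d p.1 p.2 with hAp
  set Aq := principalBasis d q.1 q.2 with hAq
  have key1 : ((Uᴴ * Aqᴴ * U)ᴴ * (Uᴴ * Apᴴ * U)).trace = if q = p then (d:ℂ) else 0 := by
    have : (Uᴴ * Aqᴴ * U)ᴴ = Uᴴ * Aq * U := by
      simp [Matrix.conjTranspose_mul, Matrix.mul_assoc]
    rw [this]
    have hmid : U * (Uᴴ * Apᴴ * U) = Apᴴ * U := by
      rw [← Matrix.mul_assoc, ← Matrix.mul_assoc, hUU, Matrix.one_mul]
    have this2 : Uᴴ * Aq * U * (Uᴴ * Apᴴ * U) = Uᴴ * (Aq * Apᴴ) * U := by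
      rw [Matrix.mul_assoc (Uᴴ * Aq) U _, hmid]
      noncomm_ring
    rw [this2, Matrix.trace_mul_cycle, hUU, Matrix.one_mul,
      Matrix.trace_mul_comm, trace_orth' d p q]
    by_cases h : p = q
    · simp [h]
    · rw [if_neg h, if_neg (fun hh => h hh.symm)]
  have key2 : ((Uᴴ * Aqᴴ * U)ᴴ * (Uᴴ * Apᴴ * U)).trace
      = (d:ℂ) * ∑ r : ZMod d × ZMod d, cf d U p r * (starRingEnd ℂ) (cf d U q r) := by
    rw [expand_cf d U p, expand_cf d U q]
    rw [Matrix.conjTranspose_sum]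
    simp only [Matrix.conjTranspose_smul, Matrix.conjTranspose_conjTranspose]
    rw [Finset.sum_mul_sum]
    rw [Matrix.trace_sum]
    simp only [Matrix.trace_sum, Matrix.smul_mul, Matrix.mul_smul, smul_smul, Matrix.trace_smul,
      smul_eq_mul]
    have horth : ∀ s r : ZMod d × ZMod d,
        ((principalBasis d s.1 s.2) * (principalBasis d r.1 r.2)ᴴ).trace
          = if r = s then (d:ℂ) else 0 := by
      intro s r
      rw [Matrix.trace_mul_comm, trace_orth' d r s]
    simp only [horth, mul_ite, mul_zero]
    rw [Finset.sum_comm]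
    rw [Finset.mul_sum]
    refine Finset.sum_congr rfl fun r _ => ?_
    rw [Finset.sum_eq_single r]
    · rw [if_pos rfl]
      simp only [Complex.star_def]
      ring
    · intro s _ hs
      rw [if_neg (Ne.symm hs)]
    · intro h
      exact absurd (Finset.mem_univ r) h
  rw [key1] at key2
  by_cases hpq : p = q
  · subst hpq
    rw [if_pos rfl]
    rw [if_pos rfl] at key2
    exact (mul_left_cancel₀ hd (by rw [mul_one, ← key2])).symm
  · rw [if_neg hpq]
    rw [if_neg (fun h => hpq h.symm)] at key2
    rcases mul_eq_zero.mp key2.symm with h | h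
    · exact absurd h hd
    · exact h

end Part3

namespace Part4
open CorrAux Part2 Part3

variable (d : ℕ) [NeZero d]

noncomputable def Mu (U : Matrix (ZMod d) (ZMod d) ℂ) :
    Matrix {p : ZMod d × ZMod d // p ≠ (0, 0)} {p : ZMod d × ZMod d // p ≠ (0, 0)} ℂ :=
  Matrix.of fun p r => cf d U p.val r.val

lemma sum_subtype_eq (f : ZMod d × ZMod d → ℂ) (h : f (0, 0) = 0) :
    ∑ x : {p : ZMod d × ZMod d // p ≠ (0, 0)}, f x.val = ∑ x : ZMod d × ZMod d, f x := by
  rw [← Finset.sum_subtype (Finset.univ.erase ((0,0) : ZMod d × ZMod d))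
    (fun x => by simp [Finset.mem_erase]) f]
  exact Finset.sum_erase _ h

lemma Mu_unitary (U : Matrix (ZMod d) (ZMod d) ℂ) (hU : U ∈ Matrix.unitaryGroup (ZMod d) ℂ) :
    Mu d U ∈ Matrix.unitaryGroup {p : ZMod d × ZMod d // p ≠ (0, 0)} ℂ := by
  rw [Matrix.mem_unitaryGroup_iff]
  ext p q
  rw [Matrix.star_eq_conjTranspose, Matrix.mul_apply]
  have : ∀ r : {p : ZMod d × ZMod d // p ≠ (0, 0)},
      Mu d U p r * (Mu d U)ᴴ r q = cf d U p.val r.val * (starRingEnd ℂ) (cf d U q.val r.val) := by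
    intro r
    simp [Mu, Matrix.conjTranspose_apply, Complex.star_def]
  simp only [this]
  rw [sum_subtype_eq d (fun r => cf d U p.val r * (starRingEnd ℂ) (cf d U q.val r))
    (by show cf d U p.val (0,0) * _ = 0
        rw [cf_zero d U hU p.val p.prop, zero_mul])]
  rw [cf_orth d U hU p.val q.val]
  rw [Matrix.one_apply]
  by_cases h : p = q
  · simp [h]
  · rw [if_neg h, if_neg (fun hh => h (Subtype.ext hh))]

end Part4

namespace Part5
open CorrAux Part2 Part3 Part4

lemma kron_conjT {m n p q : Type*} [Fintype m] [Fintype n] [Fintype p] [Fintype q]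
    (A : Matrix m n ℂ) (B : Matrix p q ℂ) : (A ⊗ₖ B)ᴴ = Aᴴ ⊗ₖ Bᴴ := by
  ext ⟨a, b⟩ ⟨c, e⟩
  simp [Matrix.conjTranspose_apply, Matrix.kroneckerMap_apply, star_mul']

lemma sum_kron {ι m n p q : Type*} [Fintype m] [Fintype n] [Fintype p] [Fintype q]
    (s : Finset ι) (f : ι → Matrix m n ℂ) (B : Matrix p q ℂ) :
    (∑ i ∈ s, f i) ⊗ₖ B = ∑ i ∈ s, f i ⊗ₖ B := by
  ext ⟨a, b⟩ ⟨c, e⟩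
  simp [Matrix.kroneckerMap_apply, Matrix.sum_apply, Finset.sum_mul]

lemma kron_sum {ι m n p q : Type*} [Fintype m] [Fintype n] [Fintype p] [Fintype q]
    (s : Finset ι) (A : Matrix m n ℂ) (g : ι → Matrix p q ℂ) :
    A ⊗ₖ (∑ i ∈ s, g i) = ∑ i ∈ s, A ⊗ₖ g i := by
  ext ⟨a, b⟩ ⟨c, e⟩
  simp [Matrix.kroneckerMap_apply, Matrix.sum_apply, Finset.mul_sum]

variable (d₁ d₂ : ℕ) [NeZero d₁] [NeZero d₂]

lemma corr_transform (ρ : Matrix (ZMod d₁ × ZMod d₂) (ZMod d₁ × ZMod d₂) ℂ)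
    (U₁ : Matrix (ZMod d₁) (ZMod d₁) ℂ) (U₂ : Matrix (ZMod d₂) (ZMod d₂) ℂ)
    (hU₁ : U₁ ∈ Matrix.unitaryGroup (ZMod d₁) ℂ)
    (hU₂ : U₂ ∈ Matrix.unitaryGroup (ZMod d₂) ℂ) :
    corrMat d₁ d₂ ((U₁ ⊗ₖ U₂) * ρ * (U₁ ⊗ₖ U₂)ᴴ)
      = Mu d₁ U₁ * corrMat d₁ d₂ ρ * (Mu d₂ U₂)ᵀ := by
  ext p q
  set K := U₁ ⊗ₖ U₂ with hK
  set Ap := principalBasis d₁ p.val.1 p.val.2 with hAp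
  set Aq := principalBasis d₂ q.val.1 q.val.2 with hAq
  have hL : (corrMat d₁ d₂ (K * ρ * Kᴴ)) p q
      = (ρ * ((U₁ᴴ * Apᴴ * U₁) ⊗ₖ (U₂ᴴ * Aqᴴ * U₂))).trace := by
    show (K * ρ * Kᴴ * (Apᴴ ⊗ₖ Aqᴴ)).trace = _
    rw [Matrix.mul_assoc (K * ρ) Kᴴ (Apᴴ ⊗ₖ Aqᴴ), Matrix.trace_mul_comm (K * ρ),
      ← Matrix.mul_assoc (Kᴴ * (Apᴴ ⊗ₖ Aqᴴ)) K ρ, Matrix.trace_mul_comm _ ρ]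
    congr 1
    rw [hK, kron_conjT, Matrix.mul_assoc]
    rw [← Matrix.mul_kronecker_mul, ← Matrix.mul_kronecker_mul,
      ← Matrix.mul_assoc U₁ᴴ Apᴴ U₁, ← Matrix.mul_assoc U₂ᴴ Aqᴴ U₂]
  rw [hL]
  rw [expand_cf d₁ U₁ p.val, expand_cf d₂ U₂ q.val]
  rw [sum_kron]
  simp only [kron_sum, Matrix.smul_kronecker, Matrix.kronecker_smul, smul_smul]
  simp only [Matrix.mul_sum, Matrix.trace_sum, Matrix.mul_smul, Matrix.trace_smul, smul_eq_mul]
  rw [Matrix.mul_apply]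
  have hR : ∀ s' : {q' : ZMod d₂ × ZMod d₂ // q' ≠ (0,0)},
      (Mu d₁ U₁ * corrMat d₁ d₂ ρ) p s' * (Mu d₂ U₂)ᵀ s' q
        = (∑ r : ZMod d₁ × ZMod d₁, cf d₁ U₁ p.val r *
            (ρ * ((principalBasis d₁ r.1 r.2)ᴴ ⊗ₖ (principalBasis d₂ s'.val.1 s'.val.2)ᴴ)).trace)
          * cf d₂ U₂ q.val s'.val := by
    intro s'
    have h1 : (Mu d₂ U₂)ᵀ s' q = cf d₂ U₂ q.val s'.val := rfl
    rw [h1]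
    congr 1
    rw [Matrix.mul_apply]
    have h2 : ∀ j : {p' : ZMod d₁ × ZMod d₁ // p' ≠ (0,0)},
        Mu d₁ U₁ p j * corrMat d₁ d₂ ρ j s' = cf d₁ U₁ p.val j.val *
          (ρ * ((principalBasis d₁ j.val.1 j.val.2)ᴴ ⊗ₖ
            (principalBasis d₂ s'.val.1 s'.val.2)ᴴ)).trace := fun j => rfl
    simp only [h2]
    exact sum_subtype_eq d₁ (fun r => cf d₁ U₁ p.val r *
        (ρ * ((principalBasis d₁ r.1 r.2)ᴴ ⊗ₖ (principalBasis d₂ s'.val.1 s'.val.2)ᴴ)).trace)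
      (by show cf d₁ U₁ p.val (0,0) * _ = 0
          rw [cf_zero d₁ U₁ hU₁ p.val p.prop, zero_mul])
  simp only [hR]
  refine Eq.trans ?_ (sum_subtype_eq d₂ (fun s => (∑ r : ZMod d₁ × ZMod d₁, cf d₁ U₁ p.val r *
      (ρ * ((principalBasis d₁ r.1 r.2)ᴴ ⊗ₖ (principalBasis d₂ s.1 s.2)ᴴ)).trace)
        * cf d₂ U₂ q.val s)
    (by show (∑ r : ZMod d₁ × ZMod d₁, _) * cf d₂ U₂ q.val (0,0) = 0
        rw [cf_zero d₂ U₂ hU₂ q.val q.prop, mul_zero])).symm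
  simp only [Finset.sum_mul, Finset.mul_sum]
  rw [Finset.sum_comm]
  refine Finset.sum_congr rfl fun s _ => ?_
  refine Finset.sum_congr rfl fun r _ => ?_
  ring

end Part5

section SqrtAux
open scoped MatrixOrder

lemma Matrix.PosSemidef.sqrt_eq_cfcSqrt {n : Type*} {𝕜 : Type*} [Fintype n] [DecidableEq n]
    [RCLike 𝕜] {A : Matrix n n 𝕜} (hA : A.PosSemidef) : hA.sqrt = CFC.sqrt A := by
  rw [CFC.sqrt_eq_real_sqrt A hA.nonneg, cfcₙ_eq_cfc, hA.1.cfc_eq, IsHermitian.cfc, Matrix.PosSemidef.sqrt]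
  rfl

lemma Matrix.PosSemidef.posSemidef_sqrt {n : Type*} {𝕜 : Type*} [Fintype n] [DecidableEq n]
    [RCLike 𝕜] {A : Matrix n n 𝕜} (hA : A.PosSemidef) : hA.sqrt.PosSemidef := by
  rw [hA.sqrt_eq_cfcSqrt]
  exact Matrix.nonneg_iff_posSemidef.mp (CFC.sqrt_nonneg A)

lemma Matrix.PosSemidef.sqrt_mul_self {n : Type*} {𝕜 : Type*} [Fintype n] [DecidableEq n]
    [RCLike 𝕜] {A : Matrix n n 𝕜} (hA : A.PosSemidef) : hA.sqrt * hA.sqrt = A := by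
  rw [hA.sqrt_eq_cfcSqrt]
  exact CFC.sqrt_mul_sqrt_self A hA.nonneg

lemma Matrix.PosSemidef.eq_sqrt_of_sq_eq {n : Type*} {𝕜 : Type*} [Fintype n] [DecidableEq n]
    [RCLike 𝕜] {A B : Matrix n n 𝕜} (hA : A.PosSemidef) (hB : B.PosSemidef) (h : A ^ 2 = B) :
    A = hB.sqrt := by
  rw [hB.sqrt_eq_cfcSqrt]
  exact (CFC.sqrt_unique (by rw [← sq]; exact h) hA.nonneg).symm

end SqrtAux

namespace Part6
open Polynomial

lemma charpoly_conj_unitary {n : Type*} [Fintype n] [DecidableEq n]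
    (A W : Matrix n n ℂ) (hW : W ∈ Matrix.unitaryGroup n ℂ) :
    (Wᴴ * A * W).charpoly = A.charpoly := by
  have h1 : Wᴴ * W = 1 := by
    simpa [Matrix.star_eq_conjTranspose] using Matrix.mem_unitaryGroup_iff'.mp hW
  have hdet : (Wᴴ.map (C : ℂ →+* ℂ[X])) * (W.map (C : ℂ →+* ℂ[X])) = 1 := by
    have := map_mul ((C : ℂ →+* ℂ[X]).mapMatrix) Wᴴ W
    simp only [RingHom.mapMatrix_apply] at this
    rw [← this, h1]
    simp
  have key : Matrix.charmatrix (Wᴴ * A * W)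
      = (Wᴴ.map (C : ℂ →+* ℂ[X])) * Matrix.charmatrix A * (W.map (C : ℂ →+* ℂ[X])) := by
    rw [Matrix.charmatrix, Matrix.charmatrix]
    rw [Matrix.mul_sub, Matrix.sub_mul]
    congr 1
    · rw [← (Matrix.scalar_commute (X : ℂ[X]) (fun r => Commute.all _ _) (Wᴴ.map C)).eq,
        Matrix.mul_assoc, hdet, Matrix.mul_one]
    · have := map_mul ((C : ℂ →+* ℂ[X]).mapMatrix) (Wᴴ * A) W
      have h2 := map_mul ((C : ℂ →+* ℂ[X]).mapMatrix) Wᴴ A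
      simp only [RingHom.mapMatrix_apply] at this h2 ⊢
      rw [this, h2]
  rw [Matrix.charpoly, Matrix.charpoly, key, Matrix.det_mul, Matrix.det_mul]
  have hd2 : (Wᴴ.map (C : ℂ →+* ℂ[X])).det * (W.map (C : ℂ →+* ℂ[X])).det = 1 := by
    rw [← Matrix.det_mul, hdet, Matrix.det_one]
  calc (Wᴴ.map (C : ℂ →+* ℂ[X])).det * (Matrix.charmatrix A).det * (W.map (C : ℂ →+* ℂ[X])).det
      = (Matrix.charmatrix A).det * ((Wᴴ.map (C : ℂ →+* ℂ[X])).det *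
          (W.map (C : ℂ →+* ℂ[X])).det) := by ring
    _ = (Matrix.charmatrix A).det := by rw [hd2, mul_one]

lemma conj_mul_self {m n : Type*} [Fintype m] [Fintype n] [DecidableEq m] [DecidableEq n]
    (P : Matrix m n ℂ) (V : Matrix m m ℂ) (W : Matrix n n ℂ) (hV : Vᴴ * V = 1) :
    (V * P * W)ᴴ * (V * P * W) = Wᴴ * (Pᴴ * P) * W := by
  simp only [Matrix.conjTranspose_mul, Matrix.mul_assoc]
  rw [← Matrix.mul_assoc Vᴴ V, hV, Matrix.one_mul]

lemma transpose_unitary {n : Type*} [Fintype n] [DecidableEq n]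
    (W : Matrix n n ℂ) (hW : W ∈ Matrix.unitaryGroup n ℂ) :
    Wᵀ ∈ Matrix.unitaryGroup n ℂ := by
  have h1 : W * Wᴴ = 1 := by
    simpa [Matrix.star_eq_conjTranspose] using Matrix.mem_unitaryGroup_iff.mp hW
  rw [Matrix.mem_unitaryGroup_iff']
  rw [Matrix.star_eq_conjTranspose]
  have : (Wᵀ)ᴴ = (Wᴴ)ᵀ := by
    ext a b
    simp [Matrix.conjTranspose_apply, Matrix.transpose_apply]
  rw [this, ← Matrix.transpose_mul, h1, Matrix.transpose_one]

lemma traceNorm_mul_unitary {m n : Type*} [Fintype m] [Fintype n] [DecidableEq m] [DecidableEq n]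
    (P : Matrix m n ℂ) (V : Matrix m m ℂ) (W : Matrix n n ℂ)
    (hV : V ∈ Matrix.unitaryGroup m ℂ) (hW : W ∈ Matrix.unitaryGroup n ℂ) :
    traceNorm (V * P * W) = traceNorm P := by
  have hVV : Vᴴ * V = 1 := by
    simpa [Matrix.star_eq_conjTranspose] using Matrix.mem_unitaryGroup_iff'.mp hV
  have hWW : W * Wᴴ = 1 := by
    simpa [Matrix.star_eq_conjTranspose] using Matrix.mem_unitaryGroup_iff.mp hW
  have hPP := Matrix.posSemidef_conjTranspose_mul_self P
  have hQ := Matrix.posSemidef_conjTranspose_mul_self (V * P * W)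
  have hA : (Wᴴ * hPP.sqrt * W).PosSemidef :=
    hPP.posSemidef_sqrt.conjTranspose_mul_mul_same W
  have hsq : (Wᴴ * hPP.sqrt * W) ^ 2 = (V * P * W)ᴴ * (V * P * W) := by
    rw [conj_mul_self P V W hVV, pow_two]
    simp only [Matrix.mul_assoc]
    rw [← Matrix.mul_assoc W Wᴴ, hWW, Matrix.one_mul,
      ← Matrix.mul_assoc hPP.sqrt hPP.sqrt, hPP.sqrt_mul_self, Matrix.mul_assoc]
  have hsqrt : hQ.sqrt = Wᴴ * hPP.sqrt * W := (hA.eq_sqrt_of_sq_eq hQ hsq).symm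
  rw [traceNorm, traceNorm]
  have : hQ.sqrt.trace = hPP.sqrt.trace := by
    rw [hsqrt, Matrix.trace_mul_cycle, hWW, Matrix.one_mul]
  rw [this]

end Part6

/-- If `ρ' = (U₁ ⊗ U₂) ρ (U₁ ⊗ U₂)†` for unitaries `U₁, U₂` and a density
matrix `ρ`, then `S(ρ')` has the same singular values as `S(ρ)` (the Hermitian
matrices `S(ρ')† S(ρ')` and `S(ρ)† S(ρ)` have the same characteristic
polynomial); in particular `‖S(ρ')‖_tr = ‖S(ρ)‖_tr`. -/
theorem corrMat_unitary_invariant (d₁ d₂ : ℕ) [NeZero d₁] [NeZero d₂]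
    (ρ : Matrix (ZMod d₁ × ZMod d₂) (ZMod d₁ × ZMod d₂) ℂ)
    (hρ : ρ.PosSemidef) (hρtr : ρ.trace = 1)
    (U₁ : Matrix (ZMod d₁) (ZMod d₁) ℂ) (U₂ : Matrix (ZMod d₂) (ZMod d₂) ℂ)
    (hU₁ : U₁ ∈ Matrix.unitaryGroup (ZMod d₁) ℂ)
    (hU₂ : U₂ ∈ Matrix.unitaryGroup (ZMod d₂) ℂ) :
    ((corrMat d₁ d₂ ((U₁ ⊗ₖ U₂) * ρ * (U₁ ⊗ₖ U₂)ᴴ))ᴴ *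
        corrMat d₁ d₂ ((U₁ ⊗ₖ U₂) * ρ * (U₁ ⊗ₖ U₂)ᴴ)).charpoly =
      ((corrMat d₁ d₂ ρ)ᴴ * corrMat d₁ d₂ ρ).charpoly ∧
    traceNorm (corrMat d₁ d₂ ((U₁ ⊗ₖ U₂) * ρ * (U₁ ⊗ₖ U₂)ᴴ)) =
      traceNorm (corrMat d₁ d₂ ρ) := by
  have htrans := Part5.corr_transform d₁ d₂ ρ U₁ U₂ hU₁ hU₂
  have hM₁ := Part4.Mu_unitary d₁ U₁ hU₁
  have hM₂ := Part4.Mu_unitary d₂ U₂ hU₂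
  have hM₂T := Part6.transpose_unitary _ hM₂
  have hM₁VV : (Part4.Mu d₁ U₁)ᴴ * (Part4.Mu d₁ U₁) = 1 := by
    simpa [Matrix.star_eq_conjTranspose] using Matrix.mem_unitaryGroup_iff'.mp hM₁
  constructor
  · rw [htrans, Part6.conj_mul_self _ _ _ hM₁VV]
    have : ((Part4.Mu d₂ U₂)ᵀ)ᴴ = ((Part4.Mu d₂ U₂)ᵀ)ᴴ := rfl
    exact Part6.charpoly_conj_unitary _ _ hM₂T
  · rw [htrans]
    exact Part6.traceNorm_mul_unitary _ _ _ hM₁ hM₂T
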